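/- Let N ≥ 1, let 𝔸 be a real N×N matrix, let ‖·‖_X be a norm on ℝ^N, and let m, M′, M, β be positive constants such that: (i) m‖Φ‖₂ ≤ ‖Φ‖_X ≤ M′‖Φ‖₂ for all Φ ∈ ℝ^N; (ii) |Ψᵀ𝔸Φ| ≤ M ‖Φ‖_X ‖Ψ‖_X for all Φ, Ψ ∈ ℝ^N; (iii) for every nonzero Φ ∈ ℝ^N there exists a nonzero Ψ ∈ ℝ^N with Ψᵀ𝔸Φ ≥ β ‖Φ‖_X ‖Ψ‖_X. Then 𝔸 is invertible and its spectral condition number satisfies cond₂(𝔸) = ‖𝔸‖₂ ‖𝔸⁻¹‖₂ ≤ M·M′² / (β·m²), where ‖·‖₂ denotes the operator norm induced by the Euclidean norm. -/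

import Mathlib

open scoped RealInnerProductSpace

/-- Abstract condition-number bound: if the matrix `𝔸` is continuous and satisfies
an inf-sup condition with respect to a norm `‖·‖_X` on `ℝ^N` which is equivalent to
the Euclidean norm (`m‖Φ‖₂ ≤ ‖Φ‖_X ≤ M′‖Φ‖₂`), then `𝔸` is invertible and
`cond₂(𝔸) = ‖𝔸‖₂‖𝔸⁻¹‖₂ ≤ M M′²/(β m²)`. -/
theorem stmt12 (N : ℕ) (hN : 1 ≤ N) (A : Matrix (Fin N) (Fin N) ℝ)
    (Xn : EuclideanSpace ℝ (Fin N) → ℝ)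
    (m M' M β : ℝ) (hm : 0 < m) (hM' : 0 < M') (hM : 0 < M) (hβ : 0 < β)
    (hXn_add : ∀ Φ Ψ : EuclideanSpace ℝ (Fin N), Xn (Φ + Ψ) ≤ Xn Φ + Xn Ψ)
    (hXn_smul : ∀ (c : ℝ) (Φ : EuclideanSpace ℝ (Fin N)), Xn (c • Φ) = |c| * Xn Φ)
    (hXn_pos : ∀ Φ : EuclideanSpace ℝ (Fin N), Φ ≠ 0 → 0 < Xn Φ)
    (hequiv : ∀ Φ : EuclideanSpace ℝ (Fin N), m * ‖Φ‖ ≤ Xn Φ ∧ Xn Φ ≤ M' * ‖Φ‖)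
    (hcont : ∀ Φ Ψ : EuclideanSpace ℝ (Fin N),
      |⟪Ψ, Matrix.toEuclideanLin A Φ⟫| ≤ M * (Xn Φ * Xn Ψ))
    (hinfsup : ∀ Φ : EuclideanSpace ℝ (Fin N), Φ ≠ 0 →
      ∃ Ψ : EuclideanSpace ℝ (Fin N), Ψ ≠ 0 ∧
        β * (Xn Φ * Xn Ψ) ≤ ⟪Ψ, Matrix.toEuclideanLin A Φ⟫) :
    IsUnit A ∧
      ‖LinearMap.toContinuousLinearMap (Matrix.toEuclideanLin A)‖ *
        ‖LinearMap.toContinuousLinearMap (Matrix.toEuclideanLin A⁻¹)‖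
        ≤ M * M' ^ 2 / (β * m ^ 2) := by
  set T := Matrix.toEuclideanLin A with hT
  -- lower bound: ‖T Φ‖ ≥ β m² ‖Φ‖
  have lb : ∀ Φ : EuclideanSpace ℝ (Fin N), β * m ^ 2 * ‖Φ‖ ≤ ‖T Φ‖ := by
    intro Φ
    rcases eq_or_ne Φ 0 with rfl | hΦ
    · simp
    obtain ⟨Ψ, hΨ0, hΨ⟩ := hinfsup Φ hΦ
    have hXΦ := (hequiv Φ).1
    have hXΨ := (hequiv Ψ).1
    have hΨpos : 0 < ‖Ψ‖ := norm_pos_iff.2 hΨ0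
    have h1 : β * (m * ‖Φ‖ * (m * ‖Ψ‖)) ≤ β * (Xn Φ * Xn Ψ) := by
      apply mul_le_mul_of_nonneg_left _ hβ.le
      exact mul_le_mul hXΦ hXΨ (by positivity) ((hXn_pos Φ hΦ).le)
    have h2 : ⟪Ψ, T Φ⟫ ≤ ‖Ψ‖ * ‖T Φ‖ := real_inner_le_norm Ψ (T Φ)
    have h3 := (h1.trans hΨ).trans h2
    have h4 : β * m ^ 2 * ‖Φ‖ * ‖Ψ‖ ≤ ‖T Φ‖ * ‖Ψ‖ := by nlinarith
    exact le_of_mul_le_mul_right h4 hΨpos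
  have hinj : Function.Injective T := by
    intro x y hxy
    by_contra hne
    have h0 : x - y ≠ 0 := sub_ne_zero.2 hne
    have hpos : 0 < ‖x - y‖ := norm_pos_iff.2 h0
    have hlb := lb (x - y)
    rw [map_sub, hxy, sub_self, norm_zero] at hlb
    nlinarith [mul_pos (mul_pos hβ (pow_pos hm 2)) hpos]
  have hdetu : IsUnit A.det := by
    by_contra h
    rw [isUnit_iff_ne_zero, not_not] at h
    obtain ⟨v, hv, hv0⟩ := (Matrix.exists_mulVec_eq_zero_iff).2 h
    apply hv
    have hz : T ((WithLp.equiv 2 _).symm v) = 0 := by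
      rw [hT, WithLp.equiv_symm_apply, Matrix.toEuclideanLin_apply_piLp_toLp, hv0]; simp
    have := hinj (a₁ := (WithLp.equiv 2 _).symm v) (a₂ := 0) (by simpa using hz)
    simpa using congrArg (WithLp.equiv 2 _) this
  have hunit : IsUnit A := (Matrix.isUnit_iff_isUnit_det A).2 hdetu
  refine ⟨hunit, ?_⟩
  have hAnorm : ‖LinearMap.toContinuousLinearMap T‖ ≤ M * M' ^ 2 := by
    apply ContinuousLinearMap.opNorm_le_bound _ (by positivity)
    intro Φ
    rcases eq_or_ne (T Φ) 0 with h0 | h0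
    · simp only [LinearMap.coe_toContinuousLinearMap', h0, norm_zero]; positivity
    have hip : ⟪T Φ, T Φ⟫ = ‖T Φ‖ ^ 2 := real_inner_self_eq_norm_sq (T Φ)
    have h1 : ‖T Φ‖ ^ 2 ≤ M * (Xn Φ * Xn (T Φ)) := by
      rw [← hip]; exact (le_abs_self _).trans (hcont Φ (T Φ))
    have h2 := (hequiv Φ).2
    have h3 := (hequiv (T Φ)).2
    have hXΦ0 : 0 ≤ Xn Φ := by
      rcases eq_or_ne Φ 0 with rfl | h
      · have h5 := (hequiv (0 : EuclideanSpace ℝ (Fin N))).1; simpa using h5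
      · exact (hXn_pos Φ h).le
    have hTpos : 0 < ‖T Φ‖ := norm_pos_iff.2 h0
    have h4 : Xn Φ * Xn (T Φ) ≤ (M' * ‖Φ‖) * (M' * ‖T Φ‖) :=
      mul_le_mul h2 h3 ((hXn_pos (T Φ) h0).le) (by positivity)
    have h5 : M * (Xn Φ * Xn (T Φ)) ≤ M * ((M' * ‖Φ‖) * (M' * ‖T Φ‖)) :=
      mul_le_mul_of_nonneg_left h4 hM.le
    have key : ‖T Φ‖ * ‖T Φ‖ ≤ (M * M' ^ 2 * ‖Φ‖) * ‖T Φ‖ := by nlinarith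
    simpa using le_of_mul_le_mul_right key hTpos
  have hcomp : ∀ y : EuclideanSpace ℝ (Fin N), T (Matrix.toEuclideanLin A⁻¹ y) = y := by
    intro y
    have hAAinv : A * A⁻¹ = 1 := Matrix.mul_nonsing_inv A hdetu
    apply (WithLp.equiv 2 _).injective
    rw [hT, WithLp.equiv_apply, WithLp.equiv_apply, Matrix.ofLp_toEuclideanLin_apply, Matrix.ofLp_toEuclideanLin_apply,
      Matrix.mulVec_mulVec, hAAinv, Matrix.one_mulVec]
  have hInvnorm : ‖LinearMap.toContinuousLinearMap (Matrix.toEuclideanLin A⁻¹)‖ ≤ (β * m ^ 2)⁻¹ := by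
    apply ContinuousLinearMap.opNorm_le_bound _ (by positivity)
    intro y
    have hlb := lb (Matrix.toEuclideanLin A⁻¹ y)
    rw [hcomp y] at hlb
    have hβm : 0 < β * m ^ 2 := by positivity
    have hbound : ‖Matrix.toEuclideanLin A⁻¹ y‖ ≤ (β * m ^ 2)⁻¹ * ‖y‖ := by
      rw [inv_mul_eq_div, le_div_iff₀ hβm]
      nlinarith
    exact hbound
  calc ‖LinearMap.toContinuousLinearMap T‖ *
        ‖LinearMap.toContinuousLinearMap (Matrix.toEuclideanLin A⁻¹)‖
      ≤ (M * M' ^ 2) * (β * m ^ 2)⁻¹ :=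
        mul_le_mul hAnorm hInvnorm (norm_nonneg _) (by positivity)
    _ = M * M' ^ 2 / (β * m ^ 2) := by rw [div_eq_mul_inv]
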